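/- If u : U → I and v : V → I are central idempotents in a symmetric monoidal category, then λ_I ∘ (u ⊗ v) : U ⊗ V → I is again a central idempotent. -/

import Mathlib

open CategoryTheory MonoidalCategory

/-- A central idempotent in a monoidal category. -/
def IsCentralIdempotent {C : Type*} [Category C] [MonoidalCategory C]
    {U : C} (u : U ⟶ 𝟙_ C) : Prop :=
  (U ◁ u ≫ (ρ_ U).hom = u ▷ U ≫ (λ_ U).hom) ∧ IsIso (U ◁ u ≫ (ρ_ U).hom)

theorem centralIdempotent_tensor_aux₁ {C : Type*} [Category C] [MonoidalCategory C]
    [SymmetricCategory C] {U V : C} (u : U ⟶ 𝟙_ C) (v : V ⟶ 𝟙_ C) :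
    (U ⊗ V) ◁ ((u ⊗ₘ v) ≫ (λ_ (𝟙_ C)).hom) ≫ (ρ_ (U ⊗ V)).hom
      = tensorμ U V U V ≫ ((U ◁ u ≫ (ρ_ U).hom) ⊗ₘ (V ◁ v ≫ (ρ_ V).hom)) := by
  rw [tensor_right_unitality]
  simp only [MonoidalCategory.whiskerLeft_comp, Category.assoc,
    ← MonoidalCategory.whiskerLeft_comp_assoc, Iso.hom_inv_id,
    MonoidalCategory.whiskerLeft_id, Category.id_comp,
    tensorμ_natural_right_assoc, tensorHom_comp_tensorHom]

theorem centralIdempotent_tensor_aux₂ {C : Type*} [Category C] [MonoidalCategory C]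
    [SymmetricCategory C] {U V : C} (u : U ⟶ 𝟙_ C) (v : V ⟶ 𝟙_ C) :
    ((u ⊗ₘ v) ≫ (λ_ (𝟙_ C)).hom) ▷ (U ⊗ V) ≫ (λ_ (U ⊗ V)).hom
      = tensorμ U V U V ≫ ((u ▷ U ≫ (λ_ U).hom) ⊗ₘ (v ▷ V ≫ (λ_ V).hom)) := by
  rw [tensor_left_unitality]
  simp only [comp_whiskerRight, Category.assoc,
    ← comp_whiskerRight_assoc, Iso.hom_inv_id, id_whiskerRight, Category.id_comp,
    tensorμ_natural_left_assoc, tensorHom_comp_tensorHom]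

instance tensorμ_isIso {C : Type*} [Category C] [MonoidalCategory C]
    [SymmetricCategory C] (X₁ X₂ Y₁ Y₂ : C) : IsIso (tensorμ X₁ X₂ Y₁ Y₂) :=
  ⟨tensorδ X₁ X₂ Y₁ Y₂, tensorμ_tensorδ X₁ X₂ Y₁ Y₂, tensorδ_tensorμ X₁ X₂ Y₁ Y₂⟩

/-- The tensor product of two central idempotents, `λ_I ∘ (u ⊗ v) : U ⊗ V ⟶ I`,
is again a central idempotent. -/
theorem centralIdempotent_tensor {C : Type*} [Category C] [MonoidalCategory C]
    [SymmetricCategory C] {U V : C} (u : U ⟶ 𝟙_ C) (v : V ⟶ 𝟙_ C)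
    (hu : IsCentralIdempotent u) (hv : IsCentralIdempotent v) :
    IsCentralIdempotent ((u ⊗ₘ v) ≫ (λ_ (𝟙_ C)).hom) := by
  obtain ⟨hu1, hu2⟩ := hu
  obtain ⟨hv1, hv2⟩ := hv
  constructor
  · rw [centralIdempotent_tensor_aux₁, centralIdempotent_tensor_aux₂, hu1, hv1]
  · rw [centralIdempotent_tensor_aux₁]
    have : IsIso ((U ◁ u ≫ (ρ_ U).hom) ⊗ₘ (V ◁ v ≫ (ρ_ V).hom)) := by
      rw [MonoidalCategory.tensorHom_def]
      infer_instance
    apply IsIso.comp_isIso
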